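/- Let M = (E, ρ) be a q-matroid with vertical connectivity t and (A, V) a vertical t-separation. Fix a basis β = {a₁,…,a_t, v_{t+1},…,v_n} of E with {a_i} a basis of A and {v_j} a basis of V, and define the classical matroid M_cl = (β, r) by r(X) = ρ(⟨X⟩) for X ⊆ β. Then M_cl is a matroid and its vertical connectivity equals that of M. -/

import Mathlib

open Classical in
/-- Let M = (E, ρ) be a q-matroid with vertical connectivity t and
(A, V) a vertical t-separation.  Fix a basis β = {a₁,…,a_t, v_{t+1},…,v_n} of E
with the first t elements a basis of A and the rest a basis of V, and define
r(X) = ρ(⟨X⟩) on subsets X of β.  Then (β, r) is a (classical) matroid whose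
vertical connectivity equals that of M, namely t. -/
theorem qmatroid_to_matroid_same_vertical_connectivity {F : Type*} [Field F]
    {E : Type*} [AddCommGroup E] [Module F E] [FiniteDimensional F E]
    (ρ : Submodule F E → ℕ)
    (hR1 : ∀ V : Submodule F E, ρ V ≤ Module.finrank F V)
    (hR2 : ∀ V W : Submodule F E, V ≤ W → ρ V ≤ ρ W)
    (hR3 : ∀ V W : Submodule F E, ρ (V ⊓ W) + ρ (V ⊔ W) ≤ ρ V + ρ W)
    (t : ℕ) (A V : Submodule F E)
    {ι κ : Type*} [Fintype ι] [Fintype κ] [DecidableEq ι] [DecidableEq κ]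
    (b : Module.Basis (ι ⊕ κ) F E)
    (hcard : Fintype.card ι = t)
    (hA : A = Submodule.span F (Set.range (⇑b ∘ Sum.inl)))
    (hV : V = Submodule.span F (Set.range (⇑b ∘ Sum.inr)))
    (hsep : A ⊓ V = ⊥ ∧ A ⊔ V = ⊤ ∧ t ≤ min (ρ A) (ρ V) ∧ ρ A + ρ V < ρ ⊤ + t)
    (hκ : (let qSepSet : Set ℕ := {s | ∃ A' V' : Submodule F E,
        A' ⊓ V' = ⊥ ∧ A' ⊔ V' = ⊤ ∧ s ≤ min (ρ A') (ρ V') ∧ ρ A' + ρ V' < ρ ⊤ + s}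
      (if qSepSet.Nonempty then sInf qSepSet else ρ ⊤)) = t) :
    let r : Finset (ι ⊕ κ) → ℕ := fun X => ρ (Submodule.span F (⇑b '' (X : Set (ι ⊕ κ))))
    (∀ X : Finset (ι ⊕ κ), r X ≤ X.card) ∧
    (∀ X Y : Finset (ι ⊕ κ), X ⊆ Y → r X ≤ r Y) ∧
    (∀ X Y : Finset (ι ⊕ κ), r (X ∩ Y) + r (X ∪ Y) ≤ r X + r Y) ∧
    (let clSepSet : Set ℕ := {s | ∃ X : Finset (ι ⊕ κ),
        s ≤ min (r X) (r Xᶜ) ∧ r X + r Xᶜ - r Finset.univ < s}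
     (if clSepSet.Nonempty then sInf clSepSet else r Finset.univ) = t) := by
  classical
  intro r
  obtain ⟨hAV, hAVsup, htmin, htsum⟩ := hsep
  have hspanuniv : Submodule.span F (⇑b '' ((Finset.univ : Finset (ι ⊕ κ)) : Set (ι ⊕ κ))) = ⊤ := by
    rw [Finset.coe_univ, Set.image_univ, b.span_eq]
  have runiv : r Finset.univ = ρ ⊤ := by simp only [r, hspanuniv]
  -- key facts for any X
  have keyinf : ∀ X : Finset (ι ⊕ κ),
      Submodule.span F (⇑b '' (X : Set (ι ⊕ κ))) ⊓
        Submodule.span F (⇑b '' ((Xᶜ : Finset (ι ⊕ κ)) : Set (ι ⊕ κ))) = ⊥ := by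
    intro X
    refine disjoint_iff.mp (b.linearIndependent.disjoint_span_image ?_)
    simpa using disjoint_compl_right (a := (X : Set (ι ⊕ κ)))
  have keysup : ∀ X : Finset (ι ⊕ κ),
      Submodule.span F (⇑b '' (X : Set (ι ⊕ κ))) ⊔
        Submodule.span F (⇑b '' ((Xᶜ : Finset (ι ⊕ κ)) : Set (ι ⊕ κ))) = ⊤ := by
    intro X
    rw [← Submodule.span_union, ← Set.image_union, ← Finset.coe_union, Finset.union_compl,
      hspanuniv]
  have keysum : ∀ X : Finset (ι ⊕ κ), ρ ⊤ ≤ r X + r Xᶜ := by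
    intro X
    have := hR3 (Submodule.span F (⇑b '' (X : Set (ι ⊕ κ))))
      (Submodule.span F (⇑b '' ((Xᶜ : Finset (ι ⊕ κ)) : Set (ι ⊕ κ))))
    rw [keyinf X, keysup X] at this
    simp only [r]
    omega
  refine ⟨?_, ?_, ?_, ?_⟩
  · intro X
    refine (hR1 _).trans ((finrank_span_le_card _).trans ?_)
    rw [Set.toFinset_image]
    exact (Finset.card_image_le).trans (by simp)
  · intro X Y hXY
    exact hR2 _ _ (Submodule.span_mono (Set.image_mono (by exact_mod_cast hXY)))
  · intro X Y
    have h1 : r (X ∩ Y) ≤ ρ (Submodule.span F (⇑b '' (X : Set (ι ⊕ κ))) ⊓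
        Submodule.span F (⇑b '' (Y : Set (ι ⊕ κ)))) := by
      refine hR2 _ _ (le_inf ?_ ?_) <;>
        exact Submodule.span_mono (Set.image_mono (by simp [Finset.coe_inter]))
    have h2 : r (X ∪ Y) = ρ (Submodule.span F (⇑b '' (X : Set (ι ⊕ κ))) ⊔
        Submodule.span F (⇑b '' (Y : Set (ι ⊕ κ)))) := by
      simp only [r, Finset.coe_union, Set.image_union, Submodule.span_union]
    have := hR3 (Submodule.span F (⇑b '' (X : Set (ι ⊕ κ))))
      (Submodule.span F (⇑b '' (Y : Set (ι ⊕ κ))))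
    simp only [r] at *
    omega
  · intro clSepSet
    -- q-side: t is the inf of qSepSet
    have htq : ∀ s ∈ {s : ℕ | ∃ A' V' : Submodule F E,
        A' ⊓ V' = ⊥ ∧ A' ⊔ V' = ⊤ ∧ s ≤ min (ρ A') (ρ V') ∧ ρ A' + ρ V' < ρ ⊤ + s},
        t ≤ s := by
      intro s hs
      have hne : ({s : ℕ | ∃ A' V' : Submodule F E,
        A' ⊓ V' = ⊥ ∧ A' ⊔ V' = ⊤ ∧ s ≤ min (ρ A') (ρ V') ∧ ρ A' + ρ V' < ρ ⊤ + s}).Nonempty :=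
        ⟨s, hs⟩
      simp only [hne, if_true] at hκ
      exact hκ ▸ Nat.sInf_le hs
    -- X0 := left part
    set X0 : Finset (ι ⊕ κ) := Finset.univ.image Sum.inl with hX0
    have hX0c : ((X0 : Set (ι ⊕ κ))) = Set.range Sum.inl := by
      ext x; cases x <;> simp [hX0]
    have hX0cc : (((X0ᶜ : Finset (ι ⊕ κ)) : Set (ι ⊕ κ))) = Set.range Sum.inr := by
      ext x; cases x <;> simp [hX0]
    have hrX0 : r X0 = ρ A := by
      simp only [r, hX0c, hA, ← Set.range_comp]
    have hrX0c : r X0ᶜ = ρ V := by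
      simp only [r, hX0cc, hV, ← Set.range_comp]
    have hAsum : ρ ⊤ ≤ ρ A + ρ V := by
      have := keysum X0; rw [hrX0, hrX0c] at this; exact this
    have htmem : t ∈ clSepSet := by
      refine ⟨X0, ?_, ?_⟩
      · rw [hrX0, hrX0c]; exact htmin
      · rw [hrX0, hrX0c, runiv]; omega
    have hne : clSepSet.Nonempty := ⟨t, htmem⟩
    rw [if_pos hne]
    refine le_antisymm (Nat.sInf_le htmem) (le_csInf hne ?_)
    rintro s ⟨X, hmin, hlt⟩
    refine htq s ⟨Submodule.span F (⇑b '' (X : Set (ι ⊕ κ))),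
      Submodule.span F (⇑b '' ((Xᶜ : Finset (ι ⊕ κ)) : Set (ι ⊕ κ))), keyinf X, keysup X, hmin, ?_⟩
    have := keysum X
    simp only [r] at *
    omega
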